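/- If d_ω(x) = 0 and β_ω(x) = 0, then x is a Pareto stationary point. -/

import Mathlib

open Filter Topology
open scoped RealInnerProductSpace

noncomputable section

/-- `Euc n` is Euclidean `n`-space `ℝ^n`. -/
abbrev Euc (n : ℕ) := EuclideanSpace ℝ (Fin n)

/-- `HasDirDeriv f x d D` : the one-sided directional derivative of `f` at `x`
in direction `d` exists and equals `D`, i.e. `(f (x + α • d) - f x)/α → D` as `α → 0⁺`. -/
def HasDirDeriv {n : ℕ} (f : Euc n → ℝ) (x d : Euc n) (D : ℝ) : Prop :=
  Filter.Tendsto (fun α : ℝ => (f (x + α • d) - f x) / α)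
    (nhdsWithin 0 (Set.Ioi 0)) (nhds D)

/-- `x` is Pareto stationary for the objectives `F i`:
for every direction `d`, `max_i F_i'(x; d) ≥ 0`, i.e. some objective has
nonnegative directional derivative in direction `d`. -/
def ParetoStationary {n m : ℕ} (F : Fin m → Euc n → ℝ) (x : Euc n) : Prop :=
  ∀ d : Euc n, ∃ i : Fin m, ∃ D : ℝ, HasDirDeriv (F i) x d D ∧ 0 ≤ D

/-- `θ_x(d) = max_i { ⟪∇g_i(x), d⟫ + ½⟪d, B_i(x) d⟫ + h_i(x+d) - h_i(x) }`. -/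
def theta {n m : ℕ} (g h : Fin m → Euc n → ℝ)
    (B : Fin m → Euc n → (Euc n →L[ℝ] Euc n)) (x d : Euc n) : ℝ :=
  ⨆ i : Fin m, (⟪gradient (g i) x, d⟫ + (1 / 2) * ⟪d, B i x d⟫ + h i (x + d) - h i x)

/-- `φ_{ω,x}(d) = θ_x(d) + (ω/2)‖d‖²`. -/
def phi {n m : ℕ} (g h : Fin m → Euc n → ℝ)
    (B : Fin m → Euc n → (Euc n →L[ℝ] Euc n)) (ω : ℝ) (x d : Euc n) : ℝ :=
  theta g h B x d + (ω / 2) * ‖d‖ ^ 2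

/-- if d_ω(x) = 0 and β_ω(x) = 0 then x is Pareto stationary. -/
theorem direction_zero_imp_pareto_stationary
    {n m : ℕ} (g h : Fin m → Euc n → ℝ)
    (B : Fin m → Euc n → (Euc n →L[ℝ] Euc n))
    (hm : 0 < m)
    (hg : ∀ i, ContDiff ℝ 2 (g i))
    (hsc : ∀ i, ∃ a : ℝ, 0 < a ∧ ∀ x y : Euc n,
      a * ‖x - y‖ ^ 2 ≤ ⟪gradient (g i) x - gradient (g i) y, x - y⟫)
    (hh : ∀ i, ConvexOn ℝ Set.univ (h i))
    (hBsymm : ∀ i x (u v : Euc n), ⟪B i x u, v⟫ = ⟪u, B i x v⟫)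
    (hBpos : ∀ i x (d : Euc n), d ≠ 0 → 0 < ⟪d, B i x d⟫)
    (ω : ℝ) (hω : 0 < ω)
    (dω : Euc n → Euc n)
    (hmin : ∀ y d, phi g h B ω y (dω y) ≤ phi g h B ω y d)
    (x : Euc n)
    (hd : dω x = 0) (hβ : phi g h B ω x (dω x) = 0) :
    ParetoStationary (fun i y => g i y + h i y) x := by
  have hmne : Nonempty (Fin m) := ⟨⟨0, hm⟩⟩
  intro d
  -- nonnegativity of phi at x
  have hφ : ∀ e, 0 ≤ phi g h B ω x e := fun e => hβ ▸ hmin x e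
  -- 1-D restrictions of h i
  set f : Fin m → ℝ → ℝ := fun i t => h i (x + t • d) with hf
  have hf_cvx : ∀ i, ConvexOn ℝ (Set.univ : Set ℝ) (f i) := by
    intro i
    refine ⟨convex_univ, fun s _ t _ a b ha hb hab => ?_⟩
    have key : x + (a • s + b • t) • d = a • (x + s • d) + b • (x + t • d) := by
      have : a • (x + s • d) + b • (x + t • d)
          = (a + b) • x + (a • s + b • t) • d := by
        simp only [smul_eq_mul]
        module
      rw [this, hab, one_smul]
    simp only [hf, key]
    exact (hh i).2 (Set.mem_univ _) (Set.mem_univ _) ha hb hab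
  have hmono : ∀ i, MonotoneOn (slope (f i) 0) (Set.Ioi (0:ℝ)) := by
    intro i
    exact ((hf_cvx i).slope_mono (Set.mem_univ 0)).mono
      (fun t ht => ⟨Set.mem_univ _, ne_of_gt ht⟩)
  have hbdd : ∀ i, BddBelow (slope (f i) 0 '' Set.Ioi (0:ℝ)) := by
    intro i
    refine ⟨slope (f i) 0 (-1), ?_⟩
    rintro y ⟨t, ht, rfl⟩
    exact ((hf_cvx i).slope_mono (Set.mem_univ 0))
      ⟨Set.mem_univ _, by norm_num⟩ ⟨Set.mem_univ _, ne_of_gt ht⟩ (by linarith [ht.out])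
  set Dh : Fin m → ℝ := fun i => sInf (slope (f i) 0 '' Set.Ioi (0:ℝ)) with hDh
  have hTh : ∀ i, Tendsto (slope (f i) 0) (𝓝[>] 0) (𝓝 (Dh i)) := fun i =>
    (hmono i).tendsto_nhdsGT (hbdd i)
  set Dg : Fin m → ℝ := fun i => ⟪gradient (g i) x, d⟫ with hDgdef
  -- derivative of g i along the line
  have hline : HasDerivAt (fun t : ℝ => x + t • d) d 0 := by
    simpa using ((hasDerivAt_id (0:ℝ)).smul_const d).const_add x
  have hTg : ∀ i, Tendsto (slope (fun t : ℝ => g i (x + t • d)) 0) (𝓝[>] 0) (𝓝 (Dg i)) := by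
    intro i
    have hdiff : DifferentiableAt ℝ (g i) x :=
      ((hg i).differentiable (by norm_num)).differentiableAt
    have hgrad := hdiff.hasGradientAt
    have hFD : HasFDerivAt (g i) (InnerProductSpace.toDual ℝ _ (gradient (g i) x)) x :=
      hasGradientAt_iff_hasFDerivAt.mp hgrad
    have hc : HasDerivAt (fun t : ℝ => g i (x + t • d))
        (InnerProductSpace.toDual ℝ _ (gradient (g i) x) d) 0 := by
      have hFD' : HasFDerivAt (g i)
          (InnerProductSpace.toDual ℝ _ (gradient (g i) x)) ((0:ℝ) • d + x) := by
        simpa using hFD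
      have := HasFDerivAt.comp_hasDerivAt (x := (0:ℝ)) (by simpa using hFD') hline
      simpa [Function.comp_def] using this
    rw [InnerProductSpace.toDual_apply_apply] at hc
    exact (hasDerivAt_iff_tendsto_slope.mp hc).mono_left
      (nhdsWithin_mono 0 (fun t ht => ne_of_gt ht))
  -- slope rewriting helpers
  have hslope_g : ∀ i (α : ℝ), slope (fun t : ℝ => g i (x + t • d)) 0 α
      = (g i (x + α • d) - g i x) / α := by
    intro i α
    rw [slope_def_field]
    simp
  have hslope_h : ∀ i (α : ℝ), slope (f i) 0 α = (h i (x + α • d) - h i x) / α := by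
    intro i α
    rw [slope_def_field]
    simp [hf]
  -- the key existence of a nonnegative directional derivative value
  have hkey : ∃ i, 0 ≤ Dg i + Dh i := by
    by_contra hcon
    push_neg at hcon
    -- each auxiliary function tends to Dg i + Dh i < 0
    have hev : ∀ᶠ α in 𝓝[>] (0:ℝ), ∀ i, Dg i + (α / 2) * ⟪d, B i x d⟫
        + slope (f i) 0 α + (ω / 2) * α * ‖d‖ ^ 2 < 0 := by
      rw [eventually_all]
      intro i
      have ht : Tendsto (fun α : ℝ => Dg i + (α / 2) * ⟪d, B i x d⟫
          + slope (f i) 0 α + (ω / 2) * α * ‖d‖ ^ 2) (𝓝[>] 0)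
          (𝓝 (Dg i + Dh i)) := by
        have h1 : Tendsto (fun α : ℝ => Dg i + (α / 2) * ⟪d, B i x d⟫) (𝓝[>] 0)
            (𝓝 (Dg i)) := by
          have : Tendsto (fun α : ℝ => Dg i + (α / 2) * ⟪d, B i x d⟫) (𝓝 0)
              (𝓝 (Dg i + (0 / 2) * ⟪d, B i x d⟫)) :=
            (continuous_const.add ((continuous_id.div_const 2).mul continuous_const)).tendsto 0
          simpa using this.mono_left nhdsWithin_le_nhds
        have h2 : Tendsto (fun α : ℝ => (ω / 2) * α * ‖d‖ ^ 2) (𝓝[>] 0) (𝓝 0) := by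
          have : Tendsto (fun α : ℝ => (ω / 2) * α * ‖d‖ ^ 2) (𝓝 0)
              (𝓝 ((ω / 2) * 0 * ‖d‖ ^ 2)) :=
            (((continuous_const.mul continuous_id).mul continuous_const)).tendsto 0
          simpa using this.mono_left nhdsWithin_le_nhds
        have := (h1.add (hTh i)).add h2
        simpa using this
      exact ht.eventually_lt_const (hcon i)
    obtain ⟨α, hu, hα⟩ := (hev.and self_mem_nhdsWithin).exists
    replace hα : (0:ℝ) < α := hα
    -- each sup term is < -(ω/2)‖α•d‖²
    have hterm : ∀ i, ⟪gradient (g i) x, α • d⟫ + (1 / 2) * ⟪α • d, B i x (α • d)⟫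
        + h i (x + α • d) - h i x < -((ω / 2) * ‖α • d‖ ^ 2) := by
      intro i
      have h1 : ⟪gradient (g i) x, α • d⟫ = α * Dg i := real_inner_smul_right _ _ _
      have h2 : ⟪α • d, B i x (α • d)⟫ = α * α * ⟪d, B i x d⟫ := by
        rw [map_smul, real_inner_smul_left, real_inner_smul_right]
        ring
      have h3 : h i (x + α • d) - h i x = α * slope (f i) 0 α := by
        rw [hslope_h i α, mul_div_cancel₀ _ (ne_of_gt hα)]
      have h4 : ‖α • d‖ ^ 2 = α ^ 2 * ‖d‖ ^ 2 := by
        rw [norm_smul]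
        rw [Real.norm_eq_abs, mul_pow, sq_abs]
      rw [h1, h2, h4]
      have := mul_neg_of_pos_of_neg hα (hu i)
      nlinarith [this]
    -- contradiction with hφ at α • d
    have hsup : theta g h B x (α • d) < -((ω / 2) * ‖α • d‖ ^ 2) := by
      obtain ⟨i0, hi0⟩ := Finite.exists_max (fun i : Fin m =>
        ⟪gradient (g i) x, α • d⟫ + (1 / 2) * ⟪α • d, B i x (α • d)⟫
          + h i (x + α • d) - h i x)
      calc theta g h B x (α • d) ≤ ⟪gradient (g i0) x, α • d⟫
            + (1 / 2) * ⟪α • d, B i0 x (α • d)⟫ + h i0 (x + α • d) - h i0 x :=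
          ciSup_le hi0
        _ < -((ω / 2) * ‖α • d‖ ^ 2) := hterm i0
    have := hφ (α • d)
    rw [phi] at this
    linarith
  obtain ⟨i, hi⟩ := hkey
  refine ⟨i, Dg i + Dh i, ?_, hi⟩
  -- the directional derivative exists and equals Dg i + Dh i
  have hT := (hTg i).add (hTh i)
  refine hT.congr' ?_
  filter_upwards [self_mem_nhdsWithin] with α hα
  rw [hslope_g i α, hslope_h i α]
  ring
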